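/- For every complex number q with |q| < 1, the following identity holds: Σ_{k≥1} Σ_{ℓ>k} k q^{ℓ} / ((1-q^k)(1-q^{ℓ})) = Σ_{k≥1} k^2 q^k/(1-q^k) − Σ_{k≥1} k q^k/(1-q^k)^2. -/

import Mathlib

noncomputable section

namespace LambertAux

def F (q : ℂ) (n : ℕ) : ℂ := q ^ n / (1 - q ^ n)

variable {q : ℂ}

lemma den_ne (hq : ‖q‖ < 1) {n : ℕ} (hn : n ≠ 0) : 1 - q ^ n ≠ 0 := by
  intro h
  have h1 : q ^ n = 1 := by linear_combination -h
  have h2 : ‖q ^ n‖ < 1 := by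
    rw [norm_pow]; exact pow_lt_one₀ (norm_nonneg q) hq hn
  rw [h1] at h2; simp at h2

lemma den_norm_ge (hq : ‖q‖ < 1) {n : ℕ} (hn : n ≠ 0) : 1 - ‖q‖ ≤ ‖1 - q ^ n‖ := by
  have h1 : ‖q ^ n‖ ≤ ‖q‖ := by
    rw [norm_pow]; exact pow_le_of_le_one (norm_nonneg q) hq.le hn
  have h2 := norm_sub_norm_le (1 : ℂ) (q ^ n)
  simp only [norm_one] at h2
  linarith

lemma norm_F_le (hq : ‖q‖ < 1) {n : ℕ} (hn : n ≠ 0) : ‖F q n‖ ≤ ‖q‖ ^ n / (1 - ‖q‖) := by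
  rw [F, norm_div, norm_pow]
  gcongr
  · exact den_norm_ge hq hn

lemma norm_FF_le (hq : ‖q‖ < 1) {a b : ℕ} (ha : a ≠ 0) (hb : b ≠ 0) :
    ‖F q a * F q b‖ ≤ ‖q‖ ^ a * ‖q‖ ^ b / ((1 - ‖q‖) * (1 - ‖q‖)) := by
  have h1r : (0:ℝ) < 1 - ‖q‖ := sub_pos.mpr hq
  rw [norm_mul]
  calc ‖F q a‖ * ‖F q b‖ ≤ (‖q‖ ^ a / (1 - ‖q‖)) * (‖q‖ ^ b / (1 - ‖q‖)) :=
        mul_le_mul (norm_F_le hq ha) (norm_F_le hq hb) (norm_nonneg _) (by positivity)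
    _ = ‖q‖ ^ a * ‖q‖ ^ b / ((1 - ‖q‖) * (1 - ‖q‖)) := div_mul_div_comm _ _ _ _

lemma norm_coe (k : ℕ) : ‖((k : ℂ) + 1)‖ = (k : ℝ) + 1 := by
  have h : ((k : ℂ) + 1) = ((k + 1 : ℕ) : ℂ) := by push_cast; ring
  rw [h, Complex.norm_natCast]; push_cast; ring

lemma norm_coe2 (k j : ℕ) : ‖((k : ℂ) + (j : ℂ) + 2)‖ = (k : ℝ) + (j : ℝ) + 2 := by
  have h : ((k : ℂ) + (j : ℂ) + 2) = ((k + j + 2 : ℕ) : ℂ) := by push_cast; ring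
  rw [h, Complex.norm_natCast]; push_cast; ring

lemma norm_coe1 (k j : ℕ) : ‖((k : ℂ) + (j : ℂ) + 1)‖ = (k : ℝ) + (j : ℝ) + 1 := by
  have h : ((k : ℂ) + (j : ℂ) + 1) = ((k + j + 1 : ℕ) : ℂ) := by push_cast; ring
  rw [h, Complex.norm_natCast]; push_cast; ring

lemma summable_poly_geo (hq : ‖q‖ < 1) (m : ℕ) :
    Summable (fun n : ℕ => ((n : ℝ) + 1) ^ m * ‖q‖ ^ (n + 1)) := by
  have h' : ‖(‖q‖)‖ < 1 := by rwa [Real.norm_of_nonneg (norm_nonneg q)]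
  have h0 := summable_pow_mul_geometric_of_norm_lt_one m h'
  have h1 := h0.comp_injective (add_left_injective 1)
  apply h1.congr
  intro n
  simp only [Function.comp_apply]
  push_cast
  ring

def mB (q : ℂ) (p : ℕ × ℕ) : ℝ :=
  (((p.1 : ℝ) + 1) ^ 2 * ‖q‖ ^ (p.1 + 1)) * (((p.2 : ℝ) + 1) ^ 2 * ‖q‖ ^ (p.2 + 1))

lemma summable_mB (hq : ‖q‖ < 1) : Summable (mB q) := by
  apply Summable.mul_of_nonneg (summable_poly_geo hq 2) (summable_poly_geo hq 2)
  · intro n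
    positivity
  · intro n
    positivity

lemma summable_of_bound (hq : ‖q‖ < 1) {g : ℕ × ℕ → ℂ} (K : ℝ)
    (h : ∀ k j : ℕ, ‖g (k, j)‖ ≤ K * mB q (k, j)) : Summable g := by
  apply Summable.of_norm_bounded ((summable_mB hq).mul_left K)
  intro p
  exact h p.1 p.2

lemma master_ge (hq : ‖q‖ < 1) (k j : ℕ) {c P : ℝ} (hc0 : 0 ≤ c)
    (hc : c ≤ 2 * ((k : ℝ) + 1) * ((j : ℝ) + 1)) (hP0 : 0 ≤ P)
    (hP : P ≤ ‖q‖ ^ (k + 1) * ‖q‖ ^ (j + 1)) :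
    c * P / ((1 - ‖q‖) * (1 - ‖q‖)) ≤ (2 / ((1 - ‖q‖) * (1 - ‖q‖))) * mB q (k, j) := by
  have h1r : (0:ℝ) < 1 - ‖q‖ := sub_pos.mpr hq
  have hr0 : (0:ℝ) ≤ ‖q‖ := norm_nonneg q
  have key : c * P ≤ 2 * mB q (k, j) := by
    calc c * P ≤ (2 * ((k : ℝ) + 1) * ((j : ℝ) + 1)) * (‖q‖ ^ (k + 1) * ‖q‖ ^ (j + 1)) :=
          mul_le_mul hc hP hP0 (by positivity)
      _ ≤ 2 * mB q (k, j) := by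
          rw [mB]
          have hk : ((k : ℝ) + 1) ≤ ((k : ℝ) + 1) ^ 2 := by nlinarith [Nat.cast_nonneg (α := ℝ) k]
          have hj : ((j : ℝ) + 1) ≤ ((j : ℝ) + 1) ^ 2 := by nlinarith [Nat.cast_nonneg (α := ℝ) j]
          nlinarith [pow_nonneg hr0 (k+1), pow_nonneg hr0 (j+1),
            mul_nonneg (pow_nonneg hr0 (k+1)) (pow_nonneg hr0 (j+1)),
            mul_le_mul hk hj (by positivity) (by positivity),
            mul_nonneg (mul_nonneg (by positivity : (0:ℝ) ≤ ((k:ℝ)+1)*((j:ℝ)+1)) (pow_nonneg hr0 (k+1))) (pow_nonneg hr0 (j+1))]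
  calc c * P / ((1 - ‖q‖) * (1 - ‖q‖)) ≤ (2 * mB q (k, j)) / ((1 - ‖q‖) * (1 - ‖q‖)) := by
        gcongr
    _ = (2 / ((1 - ‖q‖) * (1 - ‖q‖))) * mB q (k, j) := by ring

/-! The families of terms. -/

def ff (q : ℂ) (p : ℕ × ℕ) : ℂ :=
  ((p.1 : ℂ) + 1) * q ^ (p.1 + p.2 + 2) / ((1 - q ^ (p.1 + 1)) * (1 - q ^ (p.1 + p.2 + 2)))
def vv (q : ℂ) (p : ℕ × ℕ) : ℂ := ((p.1 : ℂ) + 1) * (F q (p.1 + 1) * F q (p.1 + p.2 + 2))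
def vv' (q : ℂ) (p : ℕ × ℕ) : ℂ :=
  ((p.1 : ℂ) + (p.2 : ℂ) + 2) * (F q (p.1 + 1) * F q (p.1 + p.2 + 2))
def qq (q : ℂ) (p : ℕ × ℕ) : ℂ := ((p.1 : ℂ) + 1) * (F q (p.2 + 1) * F q (p.1 + p.2 + 2))
def pp (q : ℂ) (p : ℕ × ℕ) : ℂ := ((p.1 : ℂ) + 1) * (F q (p.1 + 1) * F q (p.2 + 1))
def cc (q : ℂ) (p : ℕ × ℕ) : ℂ := ((p.1 : ℂ) + 1) * F q (p.1 + p.2 + 2)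
def vfull (q : ℂ) (p : ℕ × ℕ) : ℂ :=
  ((p.1 : ℂ) + (p.2 : ℂ) + 1) * (F q (p.1 + p.2 + 1) * F q (p.1 + 1))
def dd (q : ℂ) (k : ℕ) : ℂ := ((k : ℂ) + 1) * (F q (k + 1) * F q (k + 1))

/-! Termwise algebraic identities. -/

lemma idI (hq : ‖q‖ < 1) (k j : ℕ) :
    ((k : ℂ) + 1) * q ^ (k + j + 2) / ((1 - q ^ (k + 1)) * (1 - q ^ (k + j + 2)))
      = ((k : ℂ) + 1) * (F q (k + 1) * F q (j + 1))
        - ((k : ℂ) + 1) * (F q (j + 1) * F q (k + j + 2)) := by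
  have e : k + j + 2 = (k + 1) + (j + 1) := by ring
  have h1 := den_ne hq (Nat.succ_ne_zero k)
  have h2 := den_ne hq (Nat.succ_ne_zero j)
  have h3 : (1 : ℂ) - q ^ (k + j + 2) ≠ 0 := den_ne hq (by omega)
  rw [F, F, F, e, pow_add] at *
  field_simp
  ring

lemma idII (hq : ‖q‖ < 1) (k j : ℕ) :
    ((k : ℂ) + 1) * q ^ (k + j + 2) / ((1 - q ^ (k + 1)) * (1 - q ^ (k + j + 2)))
      = ((k : ℂ) + 1) * F q (k + j + 2)
        + ((k : ℂ) + 1) * (F q (k + 1) * F q (k + j + 2)) := by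
  have h1 := den_ne hq (Nat.succ_ne_zero k)
  have h3 : (1 : ℂ) - q ^ (k + j + 2) ≠ 0 := den_ne hq (by omega)
  rw [F, F]
  field_simp
  ring

lemma idIII (hq : ‖q‖ < 1) (k : ℕ) :
    ((k : ℂ) + 1) * q ^ (k + 1) / (1 - q ^ (k + 1)) ^ 2
      = ((k : ℂ) + 1) * F q (k + 1) + ((k : ℂ) + 1) * (F q (k + 1) * F q (k + 1)) := by
  have h1 := den_ne hq (Nat.succ_ne_zero k)
  rw [F]
  field_simp
  ring

/-! Summability of the families. -/

lemma pow_le_hi (hq : ‖q‖ < 1) {a b : ℕ} (h : b ≤ a) : ‖q‖ ^ a ≤ ‖q‖ ^ b :=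
  pow_le_pow_of_le_one (norm_nonneg q) hq.le h

lemma coeff_le (k j : ℕ) {c : ℝ} (h : c ≤ (k:ℝ) + (j:ℝ) + 2) :
    c ≤ 2 * ((k : ℝ) + 1) * ((j : ℝ) + 1) := by
  have hk : (0:ℝ) ≤ (k:ℝ) := Nat.cast_nonneg k
  have hj : (0:ℝ) ≤ (j:ℝ) := Nat.cast_nonneg j
  nlinarith

lemma summable_vv (hq : ‖q‖ < 1) : Summable (vv q) := by
  apply summable_of_bound hq (2 / ((1 - ‖q‖) * (1 - ‖q‖)))
  intro k j
  rw [vv, norm_mul, norm_coe]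
  calc ((k:ℝ) + 1) * ‖F q (k+1) * F q (k+j+2)‖
      ≤ ((k:ℝ) + 1) * (‖q‖ ^ (k+1) * ‖q‖ ^ (k+j+2) / ((1 - ‖q‖) * (1 - ‖q‖))) :=
        mul_le_mul_of_nonneg_left (norm_FF_le hq (by omega) (by omega)) (by positivity)
    _ = ((k:ℝ) + 1) * (‖q‖ ^ (k+1) * ‖q‖ ^ (k+j+2)) / ((1 - ‖q‖) * (1 - ‖q‖)) :=
        (mul_div_assoc _ _ _).symm
    _ ≤ _ := by
        apply master_ge hq k j (by positivity) (coeff_le k j (by nlinarith [Nat.cast_nonneg (α := ℝ) j])) (by positivity)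
        exact mul_le_mul_of_nonneg_left (pow_le_hi hq (by omega)) (by positivity)

lemma summable_vv' (hq : ‖q‖ < 1) : Summable (vv' q) := by
  apply summable_of_bound hq (2 / ((1 - ‖q‖) * (1 - ‖q‖)))
  intro k j
  rw [vv', norm_mul, norm_coe2]
  calc ((k:ℝ) + (j:ℝ) + 2) * ‖F q (k+1) * F q (k+j+2)‖
      ≤ ((k:ℝ) + (j:ℝ) + 2) * (‖q‖ ^ (k+1) * ‖q‖ ^ (k+j+2) / ((1 - ‖q‖) * (1 - ‖q‖))) :=
        mul_le_mul_of_nonneg_left (norm_FF_le hq (by omega) (by omega)) (by positivity)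
    _ = ((k:ℝ) + (j:ℝ) + 2) * (‖q‖ ^ (k+1) * ‖q‖ ^ (k+j+2)) / ((1 - ‖q‖) * (1 - ‖q‖)) :=
        (mul_div_assoc _ _ _).symm
    _ ≤ _ := by
        apply master_ge hq k j (by positivity) (coeff_le k j le_rfl) (by positivity)
        exact mul_le_mul_of_nonneg_left (pow_le_hi hq (by omega)) (by positivity)

lemma summable_qq (hq : ‖q‖ < 1) : Summable (qq q) := by
  apply summable_of_bound hq (2 / ((1 - ‖q‖) * (1 - ‖q‖)))
  intro k j
  rw [qq, norm_mul, norm_coe]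
  calc ((k:ℝ) + 1) * ‖F q (j+1) * F q (k+j+2)‖
      ≤ ((k:ℝ) + 1) * (‖q‖ ^ (j+1) * ‖q‖ ^ (k+j+2) / ((1 - ‖q‖) * (1 - ‖q‖))) :=
        mul_le_mul_of_nonneg_left (norm_FF_le hq (by omega) (by omega)) (by positivity)
    _ = ((k:ℝ) + 1) * (‖q‖ ^ (j+1) * ‖q‖ ^ (k+j+2)) / ((1 - ‖q‖) * (1 - ‖q‖)) :=
        (mul_div_assoc _ _ _).symm
    _ ≤ _ := by
        apply master_ge hq k j (by positivity) (coeff_le k j (by nlinarith [Nat.cast_nonneg (α := ℝ) j])) (by positivity)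
        calc ‖q‖ ^ (j+1) * ‖q‖ ^ (k+j+2) ≤ ‖q‖ ^ (j+1) * ‖q‖ ^ (k+1) :=
              mul_le_mul_of_nonneg_left (pow_le_hi hq (by omega)) (by positivity)
          _ = ‖q‖ ^ (k+1) * ‖q‖ ^ (j+1) := mul_comm _ _

lemma summable_pp (hq : ‖q‖ < 1) : Summable (pp q) := by
  apply summable_of_bound hq (2 / ((1 - ‖q‖) * (1 - ‖q‖)))
  intro k j
  rw [pp, norm_mul, norm_coe]
  calc ((k:ℝ) + 1) * ‖F q (k+1) * F q (j+1)‖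
      ≤ ((k:ℝ) + 1) * (‖q‖ ^ (k+1) * ‖q‖ ^ (j+1) / ((1 - ‖q‖) * (1 - ‖q‖))) :=
        mul_le_mul_of_nonneg_left (norm_FF_le hq (by omega) (by omega)) (by positivity)
    _ = ((k:ℝ) + 1) * (‖q‖ ^ (k+1) * ‖q‖ ^ (j+1)) / ((1 - ‖q‖) * (1 - ‖q‖)) :=
        (mul_div_assoc _ _ _).symm
    _ ≤ _ :=
        master_ge hq k j (by positivity) (coeff_le k j (by nlinarith [Nat.cast_nonneg (α := ℝ) j])) (by positivity) le_rfl

lemma summable_vfull (hq : ‖q‖ < 1) : Summable (vfull q) := by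
  apply summable_of_bound hq (2 / ((1 - ‖q‖) * (1 - ‖q‖)))
  intro k j
  rw [vfull, norm_mul, norm_coe1]
  calc ((k:ℝ) + (j:ℝ) + 1) * ‖F q (k+j+1) * F q (k+1)‖
      ≤ ((k:ℝ) + (j:ℝ) + 1) * (‖q‖ ^ (k+j+1) * ‖q‖ ^ (k+1) / ((1 - ‖q‖) * (1 - ‖q‖))) :=
        mul_le_mul_of_nonneg_left (norm_FF_le hq (by omega) (by omega)) (by positivity)
    _ = ((k:ℝ) + (j:ℝ) + 1) * (‖q‖ ^ (k+j+1) * ‖q‖ ^ (k+1)) / ((1 - ‖q‖) * (1 - ‖q‖)) :=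
        (mul_div_assoc _ _ _).symm
    _ ≤ _ := by
        apply master_ge hq k j (by positivity) (coeff_le k j (by nlinarith)) (by positivity)
        calc ‖q‖ ^ (k+j+1) * ‖q‖ ^ (k+1) ≤ ‖q‖ ^ (j+1) * ‖q‖ ^ (k+1) :=
              mul_le_mul_of_nonneg_right (pow_le_hi hq (by omega)) (by positivity)
          _ = ‖q‖ ^ (k+1) * ‖q‖ ^ (j+1) := mul_comm _ _

lemma summable_cc (hq : ‖q‖ < 1) : Summable (cc q) := by
  have h1r : (0:ℝ) < 1 - ‖q‖ := sub_pos.mpr hq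
  apply summable_of_bound hq (2 / ((1 - ‖q‖) * (1 - ‖q‖)))
  intro k j
  rw [cc, norm_mul, norm_coe]
  calc ((k:ℝ) + 1) * ‖F q (k+j+2)‖
      ≤ ((k:ℝ) + 1) * (‖q‖ ^ (k+j+2) / (1 - ‖q‖)) :=
        mul_le_mul_of_nonneg_left (norm_F_le hq (by omega)) (by positivity)
    _ ≤ ((k:ℝ) + 1) * (‖q‖ ^ (k+1) * ‖q‖ ^ (j+1)) / ((1 - ‖q‖) * (1 - ‖q‖)) := by
        rw [show k+j+2 = (k+1)+(j+1) by ring, pow_add, ← mul_div_assoc]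
        gcongr
        nlinarith [norm_nonneg q]
    _ ≤ _ := master_ge hq k j (by positivity) (coeff_le k j (by nlinarith [Nat.cast_nonneg (α := ℝ) j])) (by positivity) le_rfl

lemma summable_ff (hq : ‖q‖ < 1) : Summable (ff q) := by
  have h1r : (0:ℝ) < 1 - ‖q‖ := sub_pos.mpr hq
  apply summable_of_bound hq (2 / ((1 - ‖q‖) * (1 - ‖q‖)))
  intro k j
  rw [ff]
  rw [norm_div, norm_mul, norm_mul, norm_pow, norm_coe]
  calc ((k:ℝ) + 1) * ‖q‖ ^ (k+j+2) / (‖1 - q ^ (k+1)‖ * ‖1 - q ^ (k+j+2)‖)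
      ≤ ((k:ℝ) + 1) * ‖q‖ ^ (k+j+2) / ((1 - ‖q‖) * (1 - ‖q‖)) := by
        gcongr
        · exact den_norm_ge hq (by omega)
        · exact den_norm_ge hq (by omega)
    _ = ((k:ℝ) + 1) * (‖q‖ ^ (k+1) * ‖q‖ ^ (j+1)) / ((1 - ‖q‖) * (1 - ‖q‖)) := by
        rw [show k+j+2 = (k+1)+(j+1) by ring, pow_add]
    _ ≤ _ := master_ge hq k j (by positivity) (coeff_le k j (by nlinarith [Nat.cast_nonneg (α := ℝ) j])) (by positivity) le_rfl

lemma summable_dd (hq : ‖q‖ < 1) : Summable (dd q) := by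
  have h1r : (0:ℝ) < 1 - ‖q‖ := sub_pos.mpr hq
  apply Summable.of_norm_bounded ((summable_poly_geo hq 1).mul_left
    (1 / ((1 - ‖q‖) * (1 - ‖q‖))))
  intro k
  rw [dd, norm_mul, norm_coe]
  have hp : ‖q‖ ^ (k+1) * ‖q‖ ^ (k+1) ≤ ‖q‖ ^ (k+1) := by
    nlinarith [pow_nonneg (norm_nonneg q) (k+1), pow_le_one₀ (norm_nonneg q) hq.le (n := k+1)]
  calc ((k:ℝ)+1) * ‖F q (k+1) * F q (k+1)‖
      ≤ ((k:ℝ)+1) * (‖q‖^(k+1) * ‖q‖^(k+1) / ((1-‖q‖)*(1-‖q‖))) :=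
        mul_le_mul_of_nonneg_left (norm_FF_le hq (by omega) (by omega)) (by positivity)
    _ = ((k:ℝ)+1) * (‖q‖^(k+1) * ‖q‖^(k+1)) / ((1-‖q‖)*(1-‖q‖)) := (mul_div_assoc _ _ _).symm
    _ ≤ 1 / ((1-‖q‖)*(1-‖q‖)) * (((k:ℝ)+1)^1 * ‖q‖^(k+1)) := by
        rw [one_div_mul_eq_div, pow_one]
        gcongr

lemma summable_coef (hq : ‖q‖ < 1) {c : ℕ → ℂ} (h : ∀ k, ‖c k‖ ≤ ((k:ℝ)+1)^2) :
    Summable (fun k => c k * F q (k+1)) := by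
  have h1r : (0:ℝ) < 1 - ‖q‖ := sub_pos.mpr hq
  apply Summable.of_norm_bounded ((summable_poly_geo hq 2).mul_left (1/(1-‖q‖)))
  intro k
  rw [norm_mul]
  calc ‖c k‖ * ‖F q (k+1)‖ ≤ ((k:ℝ)+1)^2 * (‖q‖^(k+1)/(1-‖q‖)) :=
        mul_le_mul (h k) (norm_F_le hq (by omega)) (norm_nonneg _) (by positivity)
    _ = 1/(1-‖q‖) * (((k:ℝ)+1)^2 * ‖q‖^(k+1)) := by
        field_simp

/-! The index reparametrizations. -/

def sLT : Set (ℕ × ℕ) := {p | p.1 < p.2}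

def E1 : ℕ × ℕ ≃ ↥sLT where
  toFun p := ⟨(p.1, p.1 + p.2 + 1), by simp only [sLT, Set.mem_setOf_eq]; omega⟩
  invFun x := (x.1.1, x.1.2 - x.1.1 - 1)
  left_inv p := by
    obtain ⟨a, b⟩ := p
    have h : a + b + 1 - a - 1 = b := by omega
    simp [h]
  right_inv x := by
    obtain ⟨⟨a, b⟩, h⟩ := x
    simp only [sLT, Set.mem_setOf_eq] at h
    apply Subtype.ext
    simp only
    exact Prod.ext rfl (by omega)

def E2 : ℕ × ℕ ≃ ↥sLTᶜ where
  toFun p := ⟨(p.1 + p.2, p.1), by simp [sLT]⟩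
  invFun x := (x.1.2, x.1.1 - x.1.2)
  left_inv p := by
    obtain ⟨a, b⟩ := p
    have h : a + b - a = b := by omega
    simp [h]
  right_inv x := by
    obtain ⟨⟨a, b⟩, h⟩ := x
    simp only [sLT, Set.mem_compl_iff, Set.mem_setOf_eq, not_lt] at h
    apply Subtype.ext
    simp only
    exact Prod.ext (by omega) rfl

def Esig : (Σ _n : ℕ, Fin (_n + 1)) ≃ ℕ × ℕ where
  toFun x := ((x.2 : ℕ), x.1 - (x.2 : ℕ))
  invFun p := ⟨p.1 + p.2, ⟨p.1, by omega⟩⟩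
  left_inv x := by
    obtain ⟨n, i⟩ := x
    have hi : (i : ℕ) ≤ n := Fin.is_le i
    simp only
    congr 1
    · omega
    · apply Fin.heq_ext_iff ?_ |>.mpr
      · simp
      · omega
  right_inv p := by
    obtain ⟨a, b⟩ := p
    simp

/-! The sum relations. -/

lemma N1 (hq : ‖q‖ < 1) : ∑' p, ff q p = ∑' p, pp q p - ∑' p, qq q p := by
  rw [← Summable.tsum_sub (summable_pp hq) (summable_qq hq)]
  exact tsum_congr fun p => idI hq p.1 p.2

lemma N2 (hq : ‖q‖ < 1) : ∑' p, vv q p + ∑' p, qq q p = ∑' p, vv' q p := by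
  have h1 : ∑' p, qq q p = ∑' p : ℕ × ℕ, qq q ((Equiv.prodComm ℕ ℕ) p) :=
    ((Equiv.prodComm ℕ ℕ).tsum_eq (qq q)).symm
  have hsw : Summable (fun p : ℕ × ℕ => qq q ((Equiv.prodComm ℕ ℕ) p)) :=
    ((Equiv.prodComm ℕ ℕ).summable_iff).mpr (summable_qq hq)
  rw [h1, ← Summable.tsum_add (summable_vv hq) hsw]
  apply tsum_congr
  intro p
  show vv q p + qq q (p.2, p.1) = vv' q p
  obtain ⟨k, j⟩ := p
  simp only [vv, qq, vv']
  rw [show j + k + 2 = k + j + 2 from by omega]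
  ring

lemma N3 (hq : ‖q‖ < 1) : ∑' p, pp q p = ∑' p, vv q p + ∑' p, vfull q p := by
  have hdecomp := Summable.tsum_add_tsum_compl (s := sLT)
    ((summable_pp hq).subtype sLT) ((summable_pp hq).subtype sLTᶜ)
  have hA : ∑' x : ↥sLT, pp q (x : ℕ × ℕ) = ∑' p, vv q p := by
    rw [← E1.tsum_eq (fun x : ↥sLT => pp q (x : ℕ × ℕ))]
    apply tsum_congr
    intro p
    show pp q (p.1, p.1 + p.2 + 1) = vv q p
    rfl
  have hB : ∑' x : ↥sLTᶜ, pp q (x : ℕ × ℕ) = ∑' p, vfull q p := by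
    rw [← E2.tsum_eq (fun x : ↥sLTᶜ => pp q (x : ℕ × ℕ))]
    apply tsum_congr
    intro p
    show pp q (p.1 + p.2, p.1) = vfull q p
    obtain ⟨k, j⟩ := p
    simp only [pp, vfull]
    push_cast
    ring
  rw [← hdecomp, hA, hB]

lemma N4 (hq : ‖q‖ < 1) : ∑' p, vfull q p = ∑' k, dd q k + ∑' p, vv' q p := by
  rw [Summable.tsum_prod' (summable_vfull hq) (fun k => (summable_vfull hq).prod_factor k)]
  have inner : ∀ k : ℕ, ∑' j, vfull q (k, j) = dd q k + ∑' j, vv' q (k, j) := by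
    intro k
    rw [Summable.tsum_eq_zero_add ((summable_vfull hq).prod_factor k)]
    congr 1
    · simp [vfull, dd]
    · apply tsum_congr
      intro j
      show vfull q (k, j + 1) = vv' q (k, j)
      simp only [vfull, vv']
      push_cast
      rw [show k + (j + 1) + 1 = k + j + 2 from by omega]
      ring
  calc ∑' k, ∑' j, vfull q (k, j) = ∑' k, (dd q k + ∑' j, vv' q (k, j)) := tsum_congr inner
    _ = ∑' k, dd q k + ∑' k, ∑' j, vv' q (k, j) :=
        Summable.tsum_add (summable_dd hq) (summable_vv' hq).prod
    _ = ∑' k, dd q k + ∑' p, vv' q p := by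
        rw [← Summable.tsum_prod' (summable_vv' hq) (fun k => (summable_vv' hq).prod_factor k)]

lemma N5 (hq : ‖q‖ < 1) : ∑' p, ff q p = ∑' p, cc q p + ∑' p, vv q p := by
  rw [← Summable.tsum_add (summable_cc hq) (summable_vv hq)]
  exact tsum_congr fun p => idII hq p.1 p.2

lemma gauss (m : ℕ) : ∑ i ∈ Finset.range m, ((i : ℂ) + 1) = (m : ℂ) * ((m : ℂ) + 1) / 2 := by
  induction m with
  | zero => simp
  | succ n ih =>
    rw [Finset.sum_range_succ, ih]
    push_cast
    ring

lemma NC (hq : ‖q‖ < 1) :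
    ∑' p, cc q p = ∑' n : ℕ, ((n : ℂ) + 1) * ((n : ℂ) + 2) / 2 * F q (n + 2) := by
  have h2 : Summable (cc q ∘ Esig) := (Esig.summable_iff (f := cc q)).mpr (summable_cc hq)
  rw [← Esig.tsum_eq (cc q)]
  rw [Summable.tsum_sigma' (f := fun c : (Σ _n : ℕ, Fin (_n + 1)) => cc q (Esig c)) (fun n => Summable.of_finite) h2]
  apply tsum_congr
  intro n
  rw [tsum_fintype]
  have hterm : ∀ i : Fin (n + 1),
      cc q (Esig ⟨n, i⟩) = (((i : ℕ) : ℂ) + 1) * F q (n + 2) := by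
    intro i
    have hi : (i : ℕ) ≤ n := Fin.is_le i
    show (((i : ℕ) : ℂ) + 1) * F q ((i : ℕ) + (n - (i : ℕ)) + 2) = _
    rw [show (i : ℕ) + (n - (i : ℕ)) + 2 = n + 2 from by omega]
  calc ∑ i : Fin (n + 1), cc q (Esig ⟨n, i⟩)
      = ∑ i : Fin (n + 1), ((((i : ℕ)) : ℂ) + 1) * F q (n + 2) :=
        Finset.sum_congr rfl fun i _ => hterm i
    _ = (∑ i : Fin (n + 1), (((i : ℕ) : ℂ) + 1)) * F q (n + 2) := by
        rw [Finset.sum_mul]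
    _ = ((n : ℂ) + 1) * ((n : ℂ) + 2) / 2 * F q (n + 2) := by
        rw [Fin.sum_univ_eq_sum_range (fun i => ((i : ℂ) + 1)) (n + 1), gauss]
        push_cast
        ring_nf

end LambertAux

open LambertAux in
/-- `Σ_{k≥1} Σ_{ℓ>k} k q^ℓ / ((1-q^k)(1-q^ℓ))
      = Σ_{k≥1} k^2 q^k/(1-q^k) − Σ_{k≥1} k q^k/(1-q^k)^2`.
The inner sum over `ℓ > k` is parametrized by `ℓ = k + j + 2` with `j ≥ 0`
(here `k` ranges over `k + 1` with `k ≥ 0`). -/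
theorem lambert_double_sum_identity (q : ℂ) (hq : ‖q‖ < 1) :
    ∑' k : ℕ, ∑' j : ℕ,
        ((k : ℂ) + 1) * q ^ (k + j + 2)
          / ((1 - q ^ (k + 1)) * (1 - q ^ (k + j + 2)))
    = (∑' k : ℕ, ((k : ℂ) + 1) ^ 2 * q ^ (k + 1) / (1 - q ^ (k + 1)))
      - ∑' k : ℕ, ((k : ℂ) + 1) * q ^ (k + 1) / (1 - q ^ (k + 1)) ^ 2 := by
  have S_kF : Summable (fun k : ℕ => ((k:ℂ)+1) * F q (k+1)) :=
    summable_coef hq (fun k => by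
      rw [norm_coe]; nlinarith [Nat.cast_nonneg (α := ℝ) k])
  have S_sq : Summable (fun k : ℕ => ((k:ℂ)+1)^2 * F q (k+1)) :=
    summable_coef hq (fun k => by rw [norm_pow, norm_coe])
  have S_kk : Summable (fun k : ℕ => ((k:ℂ)*((k:ℂ)+1)) * F q (k+1)) :=
    summable_coef hq (fun k => by
      rw [norm_mul, norm_coe, Complex.norm_natCast]
      nlinarith [Nat.cast_nonneg (α := ℝ) k])
  have hU : (∑' (k:ℕ), ∑' (j:ℕ), ((k:ℂ)+1) * q^(k+j+2) / ((1-q^(k+1))*(1-q^(k+j+2))))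
      = ∑' p, ff q p :=
    (Summable.tsum_prod' (summable_ff hq) (fun k => (summable_ff hq).prod_factor k)).symm
  have hR2 : (∑' k:ℕ, ((k:ℂ)+1) * q^(k+1) / (1-q^(k+1))^2)
      = ∑' k : ℕ, ((k:ℂ)+1)*F q (k+1) + ∑' k : ℕ, dd q k := by
    rw [← Summable.tsum_add S_kF (summable_dd hq)]
    exact tsum_congr fun k => idIII hq k
  have hR1 : (∑' k:ℕ, ((k:ℂ)+1)^2 * q^(k+1) / (1-q^(k+1)))
      = ∑' k : ℕ, ((k:ℂ)+1)^2 * F q (k+1) :=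
    tsum_congr fun k => by rw [F, mul_div_assoc]
  have hsub : ∑' k : ℕ, ((k:ℂ)+1)^2*F q (k+1) - ∑' k : ℕ, ((k:ℂ)+1)*F q (k+1)
      = ∑' k : ℕ, ((k:ℂ)*((k:ℂ)+1)) * F q (k+1) := by
    rw [← Summable.tsum_sub S_sq S_kF]
    exact tsum_congr fun k => by ring
  have hshift : ∑' k : ℕ, ((k:ℂ)*((k:ℂ)+1)) * F q (k+1)
      = ∑' n : ℕ, ((n:ℂ)+1) * ((n:ℂ)+2) * F q (n+2) := by
    rw [Summable.tsum_eq_zero_add S_kk]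
    simp only [Nat.cast_zero, zero_mul, zero_add]
    apply tsum_congr
    intro n
    push_cast
    ring_nf
  have h2C : (2:ℂ) * ∑' p, cc q p = ∑' n : ℕ, ((n:ℂ)+1)*((n:ℂ)+2) * F q (n+2) := by
    rw [NC hq, ← tsum_mul_left]
    exact tsum_congr fun n => by ring
  have n1 := N1 hq
  have n2 := N2 hq
  have n3 := N3 hq
  have n4 := N4 hq
  have n5 := N5 hq
  rw [hU, hR1, hR2]
  have key : ∑' p, ff q p = 2 * ∑' p, cc q p - ∑' k : ℕ, dd q k := by
    linear_combination -n1 + n2 - n3 - n4 + 2*n5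
  rw [key, h2C, ← hshift, ← hsub]
  ring
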